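/- Let X be a subshift over a finite alphabet Λ. The maps Ξ : X → Ω_X, Ξ(x) = ξ_x, and σ : Ω_X → X (the stem) are equivariant with respect to the standard partial action θ on X and the spectral partial action ϑ on Ω_X; that is, for every g ∈ 𝔽: (a) Ξ(X_g) ⊆ Ω_g and Ξ(θ_g(x)) = g·Ξ(x) for all x ∈ X_{g⁻¹}; (b) σ(Ω_g) ⊆ X_g and σ(gξ) = θ_g(σ(ξ)) for all ξ ∈ Ω_{g⁻¹}. -/

import Mathlib

open scoped Classical

namespace SubshiftPaper

variable {Λ : Type}

/-- The left shift on infinite words. -/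
def shiftMap (x : ℕ → Λ) : ℕ → Λ := fun n => x (n + 1)

/-- Concatenation of a finite word with an infinite word. -/
def cat (α : List Λ) (y : ℕ → Λ) : ℕ → Λ := fun n => α.getD n (y (n - α.length))

/-- `α` is a prefix of the infinite word `x`. -/
def Pref (α : List Λ) (x : ℕ → Λ) : Prop := ∀ (i : ℕ) (h : i < α.length), x i = α[i]

/-- The tail of `x` after `n` letters. -/
def tail (x : ℕ → Λ) (n : ℕ) : ℕ → Λ := fun i => x (n + i)

/-- `α` occurs in `x` at position `n`. -/
def OccursAt (α : List Λ) (x : ℕ → Λ) (n : ℕ) : Prop :=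
  ∀ (i : ℕ) (h : i < α.length), x (n + i) = α[i]

/-- `α` occurs in `x` (as a contiguous block of letters). -/
def Occurs (α : List Λ) (x : ℕ → Λ) : Prop := ∃ n, OccursAt α x n

/-- `X` is a subshift: a nonempty closed shift-invariant subset. -/
def IsSubshift [TopologicalSpace Λ] (X : Set (ℕ → Λ)) : Prop :=
  X.Nonempty ∧ IsClosed X ∧ ∀ x ∈ X, shiftMap x ∈ X

/-- The set of infinite words avoiding all words in `F`. -/
def ForbidSpace (F : Set (List Λ)) : Set (ℕ → Λ) := {x | ∀ α ∈ F, ¬ Occurs α x}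

/-- `X` is a subshift of finite type. -/
def IsSFT (X : Set (ℕ → Λ)) : Prop := ∃ F : Set (List Λ), F.Finite ∧ X = ForbidSpace F

/-- The follower set of a finite word. -/
def follower (X : Set (ℕ → Λ)) (α : List Λ) : Set (ℕ → Λ) := {y | y ∈ X ∧ cat α y ∈ X}

/-- The cylinder of a finite word. -/
def cylinder (X : Set (ℕ → Λ)) (α : List Λ) : Set (ℕ → Λ) := {x | x ∈ X ∧ Pref α x}

/-- The language of `X`. -/
def Language (X : Set (ℕ → Λ)) : Set (List Λ) := {α | ∃ x ∈ X, Occurs α x}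

/-- The embedding of finite words into the free group. -/
def wd (α : List Λ) : FreeGroup Λ := (α.map FreeGroup.of).prod

/-- Indicator function of a set of group elements. -/
noncomputable def chi (s : Set (FreeGroup Λ)) : FreeGroup Λ → Bool :=
  fun g => if g ∈ s then true else false

/-- The set `ξ_x ⊆ 𝔽`. -/
def xiSet [DecidableEq Λ] (X : Set (ℕ → Λ)) (x : ℕ → Λ) : Set (FreeGroup Λ) :=
  {g | ∃ α β : List Λ, g = wd α * (wd β)⁻¹ ∧
        FreeGroup.norm g = α.length + β.length ∧
        Pref α x ∧ tail x α.length ∈ follower X α ∩ follower X β}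

/-- `ξ_x` as an element of `2^𝔽`. -/
noncomputable def xiB [DecidableEq Λ] (X : Set (ℕ → Λ)) (x : ℕ → Λ) : FreeGroup Λ → Bool :=
  chi (xiSet X x)

/-- The spectrum `Ω_X`: the closure of `{ξ_x : x ∈ X}` in `2^𝔽`. -/
noncomputable def Omega [DecidableEq Λ] (X : Set (ℕ → Λ)) : Set (FreeGroup Λ → Bool) :=
  closure ((fun x => xiB X x) '' X)

/-- Left translation of an element of `2^𝔽`. -/
def translate (g : FreeGroup Λ) (ξ : FreeGroup Λ → Bool) : FreeGroup Λ → Bool :=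
  fun h => ξ (g⁻¹ * h)

/-- `x` is the stem of `ξ`: `ξ ∩ 𝔽₊` is exactly the set of prefixes of `x`. -/
def IsStem (ξ : FreeGroup Λ → Bool) (x : ℕ → Λ) : Prop :=
  {g | ξ g = true} ∩ {g | ∃ α : List Λ, g = wd α} =
    {g | ∃ α : List Λ, g = wd α ∧ Pref α x}

/-- `x` is the stem of `ξ` at `g`: `ξ ∩ g𝔽₊ = {gα : α is a prefix of x}`. -/
def IsStemAt (ξ : FreeGroup Λ → Bool) (g : FreeGroup Λ) (x : ℕ → Λ) : Prop :=
  {h | ξ h = true} ∩ {h | ∃ α : List Λ, h = g * wd α} =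
    {h | ∃ α : List Λ, h = g * wd α ∧ Pref α x}

/-- The orbit of `ξ` under the spectral partial action. -/
def Orbit (ξ : FreeGroup Λ → Bool) : Set (FreeGroup Λ → Bool) :=
  {η | ∃ g : FreeGroup Λ, ξ g⁻¹ = true ∧ η = translate g ξ}

/-- Topological freeness of the spectral partial action. -/
noncomputable def TopFree [DecidableEq Λ] (X : Set (ℕ → Λ)) : Prop :=
  ∀ g : FreeGroup Λ, g ≠ 1 →
    ∀ U : Set (FreeGroup Λ → Bool), IsOpen U →
      (U ∩ Omega X ⊆ {ξ | ξ g⁻¹ = true ∧ translate g ξ = ξ}) → U ∩ Omega X = ∅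

/-- The periodic infinite word `γ^∞`. -/
noncomputable def perInf [Nonempty Λ] (γ : List Λ) : ℕ → Λ :=
  fun n => γ.getD (n % γ.length) (Classical.arbitrary Λ)

/-- `n`-fold concatenation of a finite word with itself. -/
def rep : ℕ → List Λ → List Λ
  | 0, _ => []
  | n + 1, γ => γ ++ rep n γ

/-- `γ` is a circuit relative to `X`. -/
noncomputable def IsCircuit [Nonempty Λ] (X : Set (ℕ → Λ)) (γ : List Λ) : Prop :=
  γ ≠ [] ∧ perInf γ ∈ X

/-- `y` is an exit for the circuit `γ`. -/
noncomputable def IsExit [Nonempty Λ] (X : Set (ℕ → Λ)) (γ : List Λ) (y : ℕ → Λ) : Prop :=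
  y ≠ perInf γ ∧ cat γ y ∈ X

/-- `z` is a strong exit for the circuit `γ`. -/
noncomputable def IsStrongExit [Nonempty Λ] (X : Set (ℕ → Λ)) (γ : List Λ) (z : ℕ → Λ) : Prop :=
  z ≠ perInf γ ∧ ∀ n : ℕ, cat (rep n γ) z ∈ X

/-- The sets `X_g` of the standard partial action. -/
def Xg [DecidableEq Λ] (X : Set (ℕ → Λ)) (g : FreeGroup Λ) : Set (ℕ → Λ) :=
  {x | ∃ α β : List Λ, g = wd α * (wd β)⁻¹ ∧
        FreeGroup.norm g = α.length + β.length ∧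
        ∃ y ∈ follower X α ∩ follower X β, x = cat α y}

/-- `x` is a fixed point for `θ_g`. -/
def IsThetaFixed [DecidableEq Λ] (X : Set (ℕ → Λ)) (g : FreeGroup Λ) (x : ℕ → Λ) : Prop :=
  ∃ α β : List Λ, g = wd α * (wd β)⁻¹ ∧
    FreeGroup.norm g = α.length + β.length ∧
    ∃ y ∈ follower X α ∩ follower X β, x = cat β y ∧ cat α y = x

/-- `x` may be collectively reached from the finite set `B`. -/
def CollReached (X : Set (ℕ → Λ)) (B : Finset (List Λ)) (x : ℕ → Λ) : Prop :=
  ∃ α γ : List Λ, Pref α x ∧ ∀ β ∈ B, cat (β ++ γ) (tail x α.length) ∈ X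

/-- `X` is collectively cofinal. -/
def CollCofinal (X : Set (ℕ → Λ)) : Prop :=
  ∀ B : Finset (List Λ), ↑B ⊆ Language X → (⋂ β ∈ B, follower X β).Nonempty →
    ∀ x ∈ X, CollReached X B x

/-- `X` is strongly cofinal. -/
def StrongCofinal (X : Set (ℕ → Λ)) : Prop :=
  ∀ β ∈ Language X, ∃ M : ℕ, ∀ x ∈ X, ∃ α γ : List Λ, Pref α x ∧
    cat (β ++ γ) (tail x α.length) ∈ X ∧ α.length + γ.length ≤ M

/-- The even shift. -/
def evenShift : Set (ℕ → Fin 2) :=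
  ForbidSpace {w | ∃ n : ℕ, w = 0 :: (List.replicate (2 * n + 1) 1 ++ [0])}


section Helpers

/-! ### Word and sequence lemmas -/

lemma cat_lt (α : List Λ) (y : ℕ → Λ) {i : ℕ} (h : i < α.length) : cat α y i = α[i] := by
  simp [cat, List.getD_eq_getElem, h]

lemma cat_ge (α : List Λ) (y : ℕ → Λ) {i : ℕ} (h : α.length ≤ i) :
    cat α y i = y (i - α.length) := by
  simp only [cat]
  rw [List.getD_eq_default _ _ h]

lemma pref_cat (α : List Λ) (y : ℕ → Λ) : Pref α (cat α y) := fun i h => cat_lt α y h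

lemma tail_cat (α : List Λ) (y : ℕ → Λ) : tail (cat α y) α.length = y := by
  funext i
  rw [tail, cat_ge α y (by omega)]
  congr 1
  omega

lemma cat_pref {α : List Λ} {x : ℕ → Λ} (h : Pref α x) : cat α (tail x α.length) = x := by
  funext n
  by_cases hn : n < α.length
  · rw [cat_lt α _ hn, h n hn]
  · rw [cat_ge α _ (by omega), tail]
    congr 1
    omega

lemma cat_nil (y : ℕ → Λ) : cat [] y = y := by
  funext n
  rw [cat_ge [] y (by simp)]
  rfl

lemma tail_zero (x : ℕ → Λ) : tail x 0 = x := by funext i; simp [tail]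

lemma cat_append (u v : List Λ) (z : ℕ → Λ) : cat (u ++ v) z = cat u (cat v z) := by
  funext n
  by_cases h1 : n < u.length
  · rw [cat_lt u _ h1, cat_lt (u ++ v) z (by simp; omega)]
    exact List.getElem_append_left h1
  · rw [cat_ge u _ (by omega)]
    by_cases h2 : n < u.length + v.length
    · rw [cat_lt (u ++ v) z (by simp; omega), cat_lt v z (by omega)]
      rw [List.getElem_append_right (by omega)]
    · rw [cat_ge (u ++ v) z (by simp; omega), cat_ge v z (by omega)]
      congr 1
      simp
      omega

lemma tail_cat_add (u : List Λ) (y : ℕ → Λ) (k : ℕ) :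
    tail (cat u y) (u.length + k) = tail y k := by
  funext i
  rw [tail, tail, cat_ge u y (by omega)]
  congr 1
  omega

lemma pref_eq_pref {α δ : List Λ} {x : ℕ → Λ} (h1 : Pref α x) (h2 : Pref δ x)
    (h : α.length = δ.length) : α = δ := by
  apply List.ext_getElem h
  intro i hi1 hi2
  rw [← h1 i hi1, ← h2 i hi2]

lemma pref_split {γ α : List Λ} {x : ℕ → Λ} (h1 : Pref γ x) (h2 : Pref α x)
    (h : γ.length ≤ α.length) : ∃ ρ, α = γ ++ ρ := by
  refine ⟨α.drop γ.length, ?_⟩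
  have hγ : γ = α.take γ.length := by
    apply pref_eq_pref h1 (fun i hi => ?_) (by simp; omega)
    rw [List.getElem_take]
    exact h2 i (by simp at hi; omega)
  conv_lhs => rw [← List.take_append_drop γ.length α]
  rw [← hγ]

lemma pref_agree {ρ : List Λ} {w w' : ℕ → Λ} {n : ℕ} (hag : ∀ i < n, w i = w' i)
    (hlen : ρ.length ≤ n) (h : Pref ρ w) : Pref ρ w' := by
  intro i hi
  rw [← hag i (by omega), h i hi]

lemma pref_cat_append (u v : List Λ) (y : ℕ → Λ) (h : Pref v y) : Pref (u ++ v) (cat u y) := by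
  intro i hi
  simp only [List.length_append] at hi
  by_cases h1 : i < u.length
  · rw [cat_lt u y h1, List.getElem_append_left h1]
  · rw [cat_ge u y (by omega), List.getElem_append_right (by omega)]
    exact h _ (by omega)

lemma pref_of_cat_pref {α γ : List Λ} {y : ℕ → Λ} (h : Pref (α ++ γ) (cat α y)) : Pref γ y := by
  intro j hj
  have := h (α.length + j) (by simp; omega)
  rw [cat_ge α y (by omega), List.getElem_append_right (by omega)] at this
  simpa using this

def listPref (x : ℕ → Λ) (n : ℕ) : List Λ := List.ofFn (fun i : Fin n => x i)

lemma length_listPref (x : ℕ → Λ) (n : ℕ) : (listPref x n).length = n := by simp [listPref]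

lemma pref_listPref (x : ℕ → Λ) (n : ℕ) : Pref (listPref x n) x := by
  intro i hi
  simp only [listPref, List.length_ofFn] at hi
  simp [listPref, List.getElem_ofFn]

lemma agree_of_pref {x x' : ℕ → Λ} {N : ℕ} (h : Pref (listPref x N) x') :
    ∀ i < N, x' i = x i := by
  intro i hi
  have := h i (by simp [listPref]; omega)
  rw [this]
  simp [listPref, List.getElem_ofFn]

lemma tail_mem {X : Set (ℕ → Λ)} [TopologicalSpace Λ] (hX : IsSubshift X) {x : ℕ → Λ}
    (hx : x ∈ X) (n : ℕ) : tail x n ∈ X := by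
  induction n with
  | zero => rw [tail_zero]; exact hx
  | succ n ih =>
    have : tail x (n + 1) = shiftMap (tail x n) := by
      funext i
      simp only [tail, shiftMap]
      congr 1
      omega
    rw [this]
    exact hX.2.2 _ ih

/-! ### Free group word lemmas -/

lemma wd_mk (α : List Λ) : wd α = FreeGroup.mk (α.map (fun a => (a, true))) := by
  induction α with
  | nil => simp [wd]; rfl
  | cons a t ih =>
    simp only [wd, List.map_cons, List.prod_cons] at *
    rw [ih, FreeGroup.of, FreeGroup.mul_mk]; rfl

lemma wd_append (u v : List Λ) : wd (u ++ v) = wd u * wd v := by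
  simp [wd]

lemma chain_reduce [DecidableEq Λ] {L : List (Λ × Bool)}
    (h : List.Chain' (fun p q => ¬(p.1 = q.1 ∧ p.2 = !q.2)) L) :
    FreeGroup.reduce L = L := by
  induction L with
  | nil => rfl
  | cons x t ih =>
    have ht := ih h.tail
    rw [FreeGroup.reduce.cons, ht]
    cases t with
    | nil => rfl
    | cons y s =>
      have : ¬(x.1 = y.1 ∧ x.2 = !y.2) := (List.isChain_cons_cons.mp h).1
      simp [this]

lemma chain_triv {σ : Type*} {R : σ → σ → Prop} (h : ∀ x y, R x y) :
    ∀ l : List σ, List.Chain' R l := by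
  intro l
  induction l with
  | nil => exact List.isChain_nil
  | cons a t ih => cases t with
    | nil => exact List.isChain_singleton a
    | cons b s => exact List.isChain_cons_cons.mpr ⟨h a b, ih⟩

lemma invRev_map (β : List Λ) :
    FreeGroup.invRev (β.map (fun a => (a, true))) = (β.map (fun a => (a, false))).reverse := by
  rw [FreeGroup.invRev, List.map_map]
  rfl

lemma reduce_mixed [DecidableEq Λ] (α β : List Λ)
    (h : ∀ a, α.getLast? = some a → β.getLast? = some a → False) :
    FreeGroup.reduce (α.map (fun a => (a, true)) ++ FreeGroup.invRev (β.map (fun a => (a, true))))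
      = α.map (fun a => (a, true)) ++ FreeGroup.invRev (β.map (fun a => (a, true))) := by
  apply chain_reduce
  rw [invRev_map]
  apply List.isChain_append.mpr
  refine ⟨(List.isChain_map _).mpr (chain_triv (fun a b => by simp) α),
    List.isChain_reverse.mpr ((List.isChain_map _).mpr (chain_triv (fun a b => by simp [flip]) β)),
    ?_⟩
  intro p hp q hq
  rw [List.getLast?_map] at hp
  rw [List.head?_reverse, List.getLast?_map] at hq
  cases hα : α.getLast? with
  | none => rw [hα] at hp; simp at hp
  | some a =>
    cases hβ : β.getLast? with
    | none => rw [hβ] at hq; simp at hq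
    | some b =>
      rw [hα] at hp; rw [hβ] at hq
      simp only [Option.map_some, Option.mem_def, Option.some.injEq] at hp hq
      subst hp; subst hq
      simp only [Bool.not_false, not_and]
      intro hab
      exact absurd (h a hα (hab ▸ hβ)) (fun f => f)

lemma toWord_wd [DecidableEq Λ] (α : List Λ) :
    (wd α).toWord = α.map (fun a => (a, true)) := by
  rw [wd_mk, FreeGroup.toWord_mk]
  have := reduce_mixed α ([] : List Λ) (by simp)
  simpa [FreeGroup.invRev] using this

lemma norm_wd [DecidableEq Λ] (α : List Λ) : (wd α).norm = α.length := by
  rw [FreeGroup.norm, toWord_wd, List.length_map]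

lemma wd_injective [DecidableEq Λ] : Function.Injective (wd : List Λ → FreeGroup Λ) := by
  intro a b h
  have := congrArg FreeGroup.toWord h
  rw [toWord_wd, toWord_wd] at this
  exact List.map_injective_iff.mpr (fun x y hxy => (Prod.mk.injEq _ _ _ _ ▸ hxy).1) this

lemma mixed_word (α β : List Λ) :
    wd α * (wd β)⁻¹ =
      FreeGroup.mk (α.map (fun a => (a, true)) ++
        FreeGroup.invRev (β.map (fun a => (a, true)))) := by
  rw [wd_mk, wd_mk, FreeGroup.inv_mk, FreeGroup.mul_mk]

lemma norm_mixed [DecidableEq Λ] (α β : List Λ)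
    (h : ∀ a, α.getLast? = some a → β.getLast? = some a → False) :
    FreeGroup.norm (wd α * (wd β)⁻¹) = α.length + β.length := by
  rw [mixed_word, FreeGroup.norm, FreeGroup.toWord_mk, reduce_mixed α β h]
  simp

lemma toWord_of_norm [DecidableEq Λ] {g : FreeGroup Λ} {α β : List Λ}
    (hpres : g = wd α * (wd β)⁻¹) (hnorm : FreeGroup.norm g = α.length + β.length) :
    g.toWord = α.map (fun a => (a, true)) ++ FreeGroup.invRev (β.map (fun a => (a, true))) := by
  set L := α.map (fun a => (a, true)) ++ FreeGroup.invRev (β.map (fun a => (a, true))) with hL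
  have hmk : g = FreeGroup.mk L := by rw [hpres, mixed_word]
  have h1 : g.toWord = FreeGroup.reduce L := by rw [hmk, FreeGroup.toWord_mk]
  have hsub : List.Sublist (FreeGroup.reduce L) L := (FreeGroup.reduce.red).sublist
  have hlen : (FreeGroup.reduce L).length = L.length := by
    have : (FreeGroup.reduce L).length = FreeGroup.norm g := by rw [FreeGroup.norm, h1]
    rw [this, hnorm, hL]
    simp
  rw [h1, hsub.eq_of_length hlen]

lemma takeWhile_append_pos (A R : List (Λ × Bool)) (hA : ∀ p ∈ A, p.2 = true)
    (hR : ∀ p ∈ R, p.2 = false) : (A ++ R).takeWhile (fun p => p.2) = A := by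
  induction A with
  | nil =>
    cases R with
    | nil => rfl
    | cons r t =>
      simp only [List.nil_append, List.takeWhile_cons]
      rw [hR r (by simp)]
      simp
  | cons a t ih =>
    simp only [List.cons_append, List.takeWhile_cons]
    rw [hA a (by simp)]
    simp only [decide_true, if_true]
    rw [ih (fun p hp => hA p (by simp [hp]))]

lemma pres_unique [DecidableEq Λ] {g : FreeGroup Λ} {α β α' β' : List Λ}
    (h1 : g = wd α * (wd β)⁻¹) (h2 : FreeGroup.norm g = α.length + β.length)
    (h3 : g = wd α' * (wd β')⁻¹) (h4 : FreeGroup.norm g = α'.length + β'.length) :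
    α = α' ∧ β = β' := by
  have e1 := toWord_of_norm h1 h2
  have e2 := toWord_of_norm h3 h4
  have key : α.map (fun a => (a, true)) ++ FreeGroup.invRev (β.map (fun a => (a, true)))
      = α'.map (fun a => (a, true)) ++ FreeGroup.invRev (β'.map (fun a => (a, true))) := by
    rw [← e1, ← e2]
  have hposA : ∀ γ : List Λ, ∀ p ∈ γ.map (fun a => (a, true)), p.2 = true := by
    intro γ p hp; rcases List.mem_map.mp hp with ⟨a, _, rfl⟩; rfl
  have hnegA : ∀ γ : List Λ, ∀ p ∈ FreeGroup.invRev (γ.map (fun a => (a, true))), p.2 = false := by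
    intro γ p hp
    rw [invRev_map] at hp
    rcases List.mem_map.mp (List.mem_reverse.mp hp) with ⟨a, _, rfl⟩; rfl
  have hAeq : α.map (fun a => (a, true)) = α'.map (fun a => (a, true)) := by
    have t1 := takeWhile_append_pos _ _ (hposA α) (hnegA β)
    have t2 := takeWhile_append_pos _ _ (hposA α') (hnegA β')
    rw [← t1, ← t2, key]
  have hα : α = α' := List.map_injective_iff.mpr
    (fun x y hxy => (Prod.mk.injEq _ _ _ _ ▸ hxy).1) hAeq
  refine ⟨hα, ?_⟩
  have hReq : FreeGroup.invRev (β.map (fun a => (a, true)))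
      = FreeGroup.invRev (β'.map (fun a => (a, true))) := by
    apply List.append_cancel_left (as := α.map (fun a => (a, true)))
    rw [key, hα]
  have := FreeGroup.invRev_injective hReq
  exact List.map_injective_iff.mpr (fun x y hxy => (Prod.mk.injEq _ _ _ _ ▸ hxy).1) this

end Helpers

section Helpers2

lemma chi_true {s : Set (FreeGroup Λ)} {g : FreeGroup Λ} : chi s g = true ↔ g ∈ s := by
  simp [chi]

lemma chi_congr {s t : Set (FreeGroup Λ)} {a b : FreeGroup Λ} (h : a ∈ s ↔ b ∈ t) :
    chi s a = chi t b := by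
  simp only [chi]
  exact if_congr h rfl rfl

lemma approx_of_mem_closure {ι κ : Type} [TopologicalSpace κ] [DiscreteTopology κ]
    {S : Set (ι → κ)} {z : ι → κ} (hz : z ∈ closure S) (G : Finset ι) :
    ∃ w ∈ S, ∀ i ∈ G, w i = z i := by
  have hU : IsOpen ((G : Set ι).pi (fun i => ({z i} : Set κ))) :=
    isOpen_set_pi G.finite_toSet (fun i _ => isOpen_discrete _)
  have hzU : z ∈ (G : Set ι).pi (fun i => ({z i} : Set κ)) := fun i _ => rfl
  rcases mem_closure_iff.mp hz _ hU hzU with ⟨w, hwU, hwS⟩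
  exact ⟨w, hwS, fun i hi => hwU i hi⟩

lemma mem_closed_of_approx {κ : Type} [TopologicalSpace κ] [DiscreteTopology κ]
    {S : Set (ℕ → κ)} (hS : IsClosed S) {z : ℕ → κ}
    (h : ∀ m : ℕ, ∃ w ∈ S, ∀ i < m, w i = z i) : z ∈ S := by
  rw [← hS.closure_eq, mem_closure_iff]
  intro U hU hzU
  rcases isOpen_pi_iff.mp hU z hzU with ⟨I, u, hI, hsub⟩
  rcases h (I.sup id + 1) with ⟨w, hwS, hw⟩
  refine ⟨w, hsub (fun i hi => ?_), hwS⟩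
  rw [hw i (by have := Finset.le_sup (f := id) hi; simp at this; omega)]
  exact (hI i hi).2

/-! ### `xiSet` membership -/

lemma Qmem [DecidableEq Λ] [TopologicalSpace Λ] {X : Set (ℕ → Λ)} (hX : IsSubshift X) :
    ∀ (n : ℕ) (γ δ : List Λ) (x : ℕ → Λ), δ.length ≤ n → x ∈ X → Pref γ x →
      cat δ (tail x γ.length) ∈ X → wd γ * (wd δ)⁻¹ ∈ xiSet X x := by
  intro n
  induction n with
  | zero =>
    intro γ δ x hlen hx hpref hδ
    have hδnil : δ = [] := List.length_eq_zero_iff.mp (by omega)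
    subst hδnil
    have hnorm : FreeGroup.norm (wd γ * (wd ([] : List Λ))⁻¹) = γ.length + 0 :=
      norm_mixed γ [] (by simp)
    exact ⟨γ, [], rfl, hnorm, hpref,
      ⟨⟨tail_mem hX hx _, by rw [cat_pref hpref]; exact hx⟩, ⟨tail_mem hX hx _, hδ⟩⟩⟩
  | succ n ih =>
    intro γ δ x hlen hx hpref hδ
    by_cases hc : ∀ a, γ.getLast? = some a → δ.getLast? = some a → False
    · exact ⟨γ, δ, rfl, norm_mixed γ δ hc, hpref,
        ⟨⟨tail_mem hX hx _, by rw [cat_pref hpref]; exact hx⟩, ⟨tail_mem hX hx _, hδ⟩⟩⟩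
    · push_neg at hc
      obtain ⟨a, hγa, hδa, -⟩ := hc
      obtain ⟨γ₀, rfl⟩ := List.getLast?_eq_some_iff.mp hγa
      obtain ⟨δ₀, rfl⟩ := List.getLast?_eq_some_iff.mp hδa
      have hgrp : wd (γ₀ ++ [a]) * (wd (δ₀ ++ [a]))⁻¹ = wd γ₀ * (wd δ₀)⁻¹ := by
        rw [wd_append, wd_append]
        group
      rw [hgrp]
      have hpref₀ : Pref γ₀ x := by
        intro i hi
        rw [hpref i (by simp; omega), List.getElem_append_left hi]
      have htail₀ : tail x γ₀.length = cat [a] (tail x (γ₀ ++ [a]).length) := by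
        funext i
        cases i with
        | zero =>
          rw [cat_lt [a] _ (by simp)]
          have := hpref γ₀.length (by simp)
          simp only [tail, Nat.add_zero]
          rw [this]
          simp
        | succ j =>
          rw [cat_ge [a] _ (by simp)]
          show x (γ₀.length + (j + 1)) = x ((γ₀ ++ [a]).length + (j + 1 - [a].length))
          congr 1
          simp only [List.length_append, List.length_singleton]
          omega
      apply ih γ₀ δ₀ x (by simp at hlen ⊢; omega) hx hpref₀
      rw [htail₀, ← cat_append]
      exact hδ

lemma mem_xiSet_of [DecidableEq Λ] [TopologicalSpace Λ] {X : Set (ℕ → Λ)} (hX : IsSubshift X)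
    {x : ℕ → Λ} {γ δ : List Λ} (hx : x ∈ X) (hpref : Pref γ x)
    (hδ : cat δ (tail x γ.length) ∈ X) : wd γ * (wd δ)⁻¹ ∈ xiSet X x :=
  Qmem hX δ.length γ δ x le_rfl hx hpref hδ

lemma wd_mem_xiSet [DecidableEq Λ] {X : Set (ℕ → Λ)} {x : ℕ → Λ} {δ : List Λ}
    (h : wd δ ∈ xiSet X x) : Pref δ x := by
  obtain ⟨γ, ρ, hpres, hnorm, hpref, -⟩ := h
  have h0 : wd δ = wd δ * (wd ([] : List Λ))⁻¹ := by simp [wd]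
  have hn0 : FreeGroup.norm (wd δ) = δ.length + ([] : List Λ).length := by simp [norm_wd]
  obtain ⟨h1, -⟩ := pres_unique h0 hn0 hpres hnorm
  rw [h1]
  exact hpref

lemma xiSet_wd_of_pref [DecidableEq Λ] [TopologicalSpace Λ] {X : Set (ℕ → Λ)}
    (hX : IsSubshift X) {x : ℕ → Λ} {δ : List Λ} (hx : x ∈ X) (h : Pref δ x) :
    wd δ ∈ xiSet X x := by
  have hmem := mem_xiSet_of hX (δ := ([] : List Λ)) hx h
    (by rw [cat_nil]; exact tail_mem hX hx _)
  have h1 : wd δ * (wd ([] : List Λ))⁻¹ = wd δ := by simp [wd]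
  rwa [h1] at hmem

lemma xi_trans_fwd [DecidableEq Λ] [TopologicalSpace Λ] {X : Set (ℕ → Λ)} (hX : IsSubshift X)
    {α β : List Λ} {y : ℕ → Λ} (hyα : y ∈ follower X α) (hyβ : y ∈ follower X β)
    {h : FreeGroup Λ} (hh : h ∈ xiSet X (cat α y)) :
    (wd β * (wd α)⁻¹) * h ∈ xiSet X (cat β y) := by
  obtain ⟨γ, δ, hpres, hnorm, hpref, htail⟩ := hh
  by_cases hc : γ.length ≤ α.length
  · obtain ⟨ρ, hα⟩ := pref_split hpref (pref_cat α y) hc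
    have ht : tail (cat α y) γ.length = cat ρ y := by
      conv_lhs => rw [hα, cat_append]
      rw [tail_cat]
    have hgrp : (wd β * (wd α)⁻¹) * h = wd β * (wd (δ ++ ρ))⁻¹ := by
      rw [hpres, hα, wd_append, wd_append]
      group
    rw [hgrp]
    apply mem_xiSet_of hX hyβ.2 (pref_cat β y)
    rw [tail_cat, cat_append]
    rw [ht] at htail
    exact htail.2.2
  · obtain ⟨γ', hγ⟩ := pref_split (pref_cat α y) hpref (by omega)
    have hγ'y : Pref γ' y := pref_of_cat_pref (hγ ▸ hpref)
    have ht : tail (cat α y) γ.length = tail y γ'.length := by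
      rw [hγ, List.length_append, tail_cat_add]
    have hgrp : (wd β * (wd α)⁻¹) * h = wd (β ++ γ') * (wd δ)⁻¹ := by
      rw [hpres, hγ, wd_append, wd_append]
      group
    rw [hgrp]
    apply mem_xiSet_of hX hyβ.2 (pref_cat_append β γ' y hγ'y)
    rw [List.length_append, tail_cat_add, ← ht]
    exact htail.2.2

lemma translate_xiB [DecidableEq Λ] [TopologicalSpace Λ] {X : Set (ℕ → Λ)} (hX : IsSubshift X)
    {α β : List Λ} {g : FreeGroup Λ} (hpres : g = wd α * (wd β)⁻¹) {y : ℕ → Λ}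
    (hy : y ∈ follower X α ∩ follower X β) :
    xiB X (cat α y) = translate g (xiB X (cat β y)) := by
  funext h
  show chi _ h = chi _ (g⁻¹ * h)
  apply chi_congr
  constructor
  · intro hm
    have := xi_trans_fwd hX hy.1 hy.2 hm
    have hg : wd β * (wd α)⁻¹ = g⁻¹ := by rw [hpres]; group
    rwa [hg] at this
  · intro hm
    have := xi_trans_fwd hX hy.2 hy.1 hm
    have hg : (wd α * (wd β)⁻¹) * (g⁻¹ * h) = h := by rw [← hpres]; group
    rwa [hg] at this

/-! ### Spectrum approximation -/

lemma omega_approx [DecidableEq Λ] {X : Set (ℕ → Λ)} {ξ : FreeGroup Λ → Bool}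
    (hξ : ξ ∈ Omega X) (G : Finset (FreeGroup Λ)) :
    ∃ x' ∈ X, ∀ h ∈ G, xiB X x' h = ξ h := by
  obtain ⟨w, hwS, hw⟩ := approx_of_mem_closure hξ G
  obtain ⟨x', hx', rfl⟩ := hwS
  exact ⟨x', hx', hw⟩

lemma stem_pref [DecidableEq Λ] {ξ : FreeGroup Λ → Bool} {x : ℕ → Λ} (h : IsStem ξ x)
    {δ : List Λ} (hδ : ξ (wd δ) = true) : Pref δ x := by
  have h' : ({g | ξ g = true} ∩ {g | ∃ α : List Λ, g = wd α} : Set (FreeGroup Λ)) =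
      {g | ∃ α : List Λ, g = wd α ∧ Pref α x} := h
  have hmem : wd δ ∈ ({g | ξ g = true} ∩ {g | ∃ α : List Λ, g = wd α} : Set (FreeGroup Λ)) :=
    ⟨hδ, δ, rfl⟩
  rw [h'] at hmem
  obtain ⟨α, hα, hp⟩ := hmem
  rwa [← wd_injective hα] at hp

lemma stem_wd {ξ : FreeGroup Λ → Bool} {x : ℕ → Λ} (h : IsStem ξ x)
    {δ : List Λ} (hp : Pref δ x) : ξ (wd δ) = true := by
  have h' : ({g | ξ g = true} ∩ {g | ∃ α : List Λ, g = wd α} : Set (FreeGroup Λ)) =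
      {g | ∃ α : List Λ, g = wd α ∧ Pref α x} := h
  have hmem : wd δ ∈ ({g | ∃ α : List Λ, g = wd α ∧ Pref α x} : Set (FreeGroup Λ)) :=
    ⟨δ, rfl, hp⟩
  rw [← h'] at hmem
  exact hmem.1

lemma key_approx [DecidableEq Λ] [TopologicalSpace Λ] {X : Set (ℕ → Λ)} {ξ : FreeGroup Λ → Bool}
    (hξ : ξ ∈ Omega X) {x : ℕ → Λ} (hst : IsStem ξ x) {g0 : FreeGroup Λ} (hg0 : ξ g0 = true)
    (G : Finset (FreeGroup Λ)) (N : ℕ) {α β : List Λ} (hpres : g0 = wd α * (wd β)⁻¹)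
    (hnorm : FreeGroup.norm g0 = α.length + β.length) :
    ∃ x' ∈ X, (∀ h ∈ G, xiB X x' h = ξ h) ∧ Pref α x' ∧
      tail x' α.length ∈ follower X α ∩ follower X β ∧ (∀ i < N, x' i = x i) := by
  obtain ⟨x', hx'X, hag⟩ := omega_approx hξ (insert g0 (insert (wd (listPref x N)) G))
  have hg0x' : g0 ∈ xiSet X x' := by
    have := hag g0 (by simp)
    rw [hg0] at this
    exact chi_true.mp this
  obtain ⟨α', β', hpres', hnorm', hprefα', htail'⟩ := hg0x'
  obtain ⟨hαeq, hβeq⟩ := pres_unique hpres hnorm hpres' hnorm'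
  subst hαeq
  subst hβeq
  have hlp : ξ (wd (listPref x N)) = true := stem_wd hst (pref_listPref x N)
  have hplp : Pref (listPref x N) x' := by
    have h2 := hag (wd (listPref x N)) (by simp)
    rw [hlp] at h2
    exact wd_mem_xiSet (X := X) (chi_true.mp h2)
  exact ⟨x', hx'X, fun h hh => hag h (by simp [hh]), hprefα', htail',
    agree_of_pref hplp⟩

end Helpers2


/-- `Ξ` and the stem map `σ` are equivariant with respect to the standard
partial action on `X` and the spectral partial action on `Ω_X`. -/
theorem equivariance {Λ : Type} [Fintype Λ] [Nonempty Λ] [DecidableEq Λ]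
    [TopologicalSpace Λ] [DiscreteTopology Λ]
    (X : Set (ℕ → Λ)) (hX : IsSubshift X) (g : FreeGroup Λ) :
    ((fun x => xiB X x) '' Xg X g ⊆ {ξ ∈ Omega X | ξ g = true}) ∧
    (∀ α β : List Λ, g = wd α * (wd β)⁻¹ →
        FreeGroup.norm g = α.length + β.length →
        ∀ y ∈ follower X α ∩ follower X β,
          xiB X (cat α y) = translate g (xiB X (cat β y))) ∧
    (∀ ξ ∈ Omega X, ξ g = true → ∀ x : ℕ → Λ, IsStem ξ x → x ∈ Xg X g) ∧
    (∀ ξ ∈ Omega X, ξ g⁻¹ = true → ∀ x : ℕ → Λ, IsStem ξ x →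
        ∀ α β : List Λ, g = wd α * (wd β)⁻¹ →
          FreeGroup.norm g = α.length + β.length →
          ∀ y : ℕ → Λ, x = cat β y → IsStem (translate g ξ) (cat α y)) := by
  constructor
  · -- (a) Ξ maps X_g into Ω_g
    rintro ζ ⟨x, hx, rfl⟩
    obtain ⟨α, β, hpres, hnorm, y, hy, rfl⟩ := hx
    refine ⟨subset_closure ⟨cat α y, hy.1.2, rfl⟩, ?_⟩
    apply chi_true.mpr
    exact ⟨α, β, hpres, hnorm, pref_cat α y, by rw [tail_cat]; exact hy⟩
  refine ⟨?_, ?_, ?_⟩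
  · -- (a) equivariance of Ξ
    intro α β hpres _ y hy
    exact translate_xiB hX hpres hy
  · -- (b) σ maps Ω_g into X_g
    intro ξ hξ hg x hst
    obtain ⟨x0, -, hag0⟩ := omega_approx hξ {g}
    have hgx0 : g ∈ xiSet X x0 := by
      have h2 := hag0 g (by simp)
      rw [hg] at h2
      exact chi_true.mp h2
    obtain ⟨α, β, hpres, hnorm, -, -⟩ := hgx0
    have happ : ∀ N : ℕ, ∃ x' ∈ X, Pref α x' ∧
        tail x' α.length ∈ follower X α ∩ follower X β ∧ (∀ i < N, x' i = x i) := by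
      intro N
      obtain ⟨x', h1, -, h3, h4, h5⟩ := key_approx hξ hst hg ∅ N hpres hnorm
      exact ⟨x', h1, h3, h4, h5⟩
    have hprefαx : Pref α x := by
      obtain ⟨x', -, hp, -, hagr⟩ := happ α.length
      intro i hi
      rw [← hagr i (by omega)]
      exact hp i hi
    have hxX : x ∈ X := by
      apply mem_closed_of_approx hX.2.1
      intro m
      obtain ⟨x', hx'X, -, -, hagr⟩ := happ m
      exact ⟨x', hx'X, hagr⟩
    have hcatβ : cat β (tail x α.length) ∈ X := by
      apply mem_closed_of_approx hX.2.1
      intro m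
      obtain ⟨x', hx'X, -, htl, hagr⟩ := happ (α.length + m)
      refine ⟨cat β (tail x' α.length), htl.2.2, ?_⟩
      intro i hi
      by_cases h1 : i < β.length
      · rw [cat_lt β _ h1, cat_lt β _ h1]
      · rw [cat_ge β _ (by omega), cat_ge β _ (by omega)]
        simp only [tail]
        exact hagr (α.length + (i - β.length)) (by omega)
    exact ⟨α, β, hpres, hnorm, tail x α.length,
      ⟨⟨tail_mem hX hxX _, by rw [cat_pref hprefαx]; exact hxX⟩,
       ⟨tail_mem hX hxX _, hcatβ⟩⟩, (cat_pref hprefαx).symm⟩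
  · -- (b) equivariance of σ
    intro ξ hξ hginv x hst α β hpres hnorm y hxy
    have hpres' : g⁻¹ = wd β * (wd α)⁻¹ := by rw [hpres]; group
    have hnorm' : FreeGroup.norm g⁻¹ = β.length + α.length := by
      rw [FreeGroup.norm_inv_eq, hnorm]
      omega
    have main : ∀ ρ : List Λ, (translate g ξ (wd ρ) = true ↔ Pref ρ (cat α y)) := by
      intro ρ
      obtain ⟨x', hx'X, hagG, hprefβ, htl, hagr⟩ :=
        key_approx hξ hst hginv {g⁻¹ * wd ρ} (β.length + ρ.length) hpres' hnorm'
      set z := tail x' β.length with hz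
      have hx'eq : x' = cat β z := (cat_pref hprefβ).symm
      have htr : xiB X (cat α z) = translate g (xiB X x') := by
        conv_rhs => rw [hx'eq]
        exact translate_xiB hX hpres ⟨htl.2, htl.1⟩
      have heval : translate g ξ (wd ρ) = xiB X (cat α z) (wd ρ) := by
        have h1 : translate g ξ (wd ρ) = ξ (g⁻¹ * wd ρ) := rfl
        have h2 : xiB X (cat α z) (wd ρ) = xiB X x' (g⁻¹ * wd ρ) := by rw [htr]; rfl
        rw [h1, h2, hagG (g⁻¹ * wd ρ) (by simp)]
      have hagree2 : ∀ i < α.length + ρ.length, cat α z i = cat α y i := by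
        intro i hi
        by_cases h1 : i < α.length
        · rw [cat_lt α _ h1, cat_lt α _ h1]
        · rw [cat_ge α _ (by omega), cat_ge α _ (by omega)]
          have hzi : z (i - α.length) = x (β.length + (i - α.length)) := by
            rw [hz, tail]
            exact hagr (β.length + (i - α.length)) (by omega)
          rw [hzi, hxy, cat_ge β _ (by omega)]
          congr 1
          omega
      constructor
      · intro hh
        rw [heval] at hh
        have hρz : Pref ρ (cat α z) := wd_mem_xiSet (chi_true.mp hh)
        exact pref_agree hagree2 (by omega) hρz
      · intro hp
        have hρz : Pref ρ (cat α z) :=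
          pref_agree (fun i hi => (hagree2 i hi).symm) (by omega) hp
        rw [heval]
        exact chi_true.mpr (xiSet_wd_of_pref hX htl.2.2 hρz)
    unfold IsStem
    apply Set.ext
    intro h
    constructor
    · rintro ⟨hh, ρ, rfl⟩
      exact ⟨ρ, rfl, (main ρ).mp hh⟩
    · rintro ⟨ρ, rfl, hp⟩
      exact ⟨(main ρ).mpr hp, ρ, rfl⟩

end SubshiftPaper
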